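/- arXiv:1809.08734 — 3 statements merged into one kernel-verified Lean document; each statement's English description precedes it below -/
import Mathlib

section
/- Thresholding theorem (Chan–Esedoglu–Nikolova, discrete version): let E(u) = ⟨c, u⟩ + J(u) where J : ℝᵛ → ℝ is convex, positively homogeneous, and satisfies the generalized coarea formula J(u) = ∫₀¹ J(1_{u > t}) dt for all u with values in [0,1]. If u* minimizes E over [0,1]ᵛ, then for almost every threshold t ∈ (0,1) the binary function 1_{u* > t} minimizes E over {0,1}ᵛ. -/
open MeasureTheory

/-- The binary thresholding of `u` at level `t`. -/
noncomputable def thresh {V : Type*} (u : V → ℝ) (t : ℝ) : V → ℝ :=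
  fun x => if t < u x then 1 else 0

/-- Thresholding theorem (Chan–Esedoglu–Nikolova, discrete version): if `J` is convex,
positively homogeneous and satisfies the generalized coarea formula, and `u*` minimizes
`E(u) = ⟨c,u⟩ + J(u)` over `[0,1]ᵛ`, then for a.e. `t ∈ (0,1)` the binary function
`1_{u* > t}` minimizes `E` over `{0,1}ᵛ`. -/
theorem thresholding_theorem {V : Type*} [Fintype V]
    (c : V → ℝ) (J : (V → ℝ) → ℝ)
    (hJconv : ConvexOn ℝ Set.univ J)
    (hJhom : ∀ (s : ℝ) (u : V → ℝ), 0 ≤ s → J (s • u) = s * J u)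
    (hcoarea : ∀ u : V → ℝ, (∀ x, u x ∈ Set.Icc (0 : ℝ) 1) →
      J u = ∫ t in Set.Ioo (0 : ℝ) 1, J (thresh u t))
    (E : (V → ℝ) → ℝ) (hE : ∀ u, E u = (∑ x, c x * u x) + J u)
    (ustar : V → ℝ) (hustar_mem : ∀ x, ustar x ∈ Set.Icc (0 : ℝ) 1)
    (hustar_min : ∀ u : V → ℝ, (∀ x, u x ∈ Set.Icc (0 : ℝ) 1) → E ustar ≤ E u) :
    ∀ᵐ t ∂(volume.restrict (Set.Ioo (0 : ℝ) 1)),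
      ∀ v : V → ℝ, (∀ x, v x = 0 ∨ v x = 1) → E (thresh ustar t) ≤ E v := by
  classical
  have hvol : volume (Set.Ioo (0:ℝ) 1) = 1 := by simp [Real.volume_Ioo]
  -- J is continuous (convex on all of a finite-dimensional space)
  have hJcont : Continuous J := by
    rw [← continuousOn_univ]
    exact hJconv.continuousOn isOpen_univ
  -- measurability of t ↦ thresh ustar t
  have hthreshmeas : Measurable (fun t => thresh ustar t) := by
    refine measurable_pi_lambda _ (fun x => ?_)
    exact Measurable.ite measurableSet_Iio measurable_const measurable_const
  -- boundedness of t ↦ J (thresh ustar t)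
  have hpne : (Finset.univ.powerset : Finset (Finset V)).Nonempty :=
    ⟨∅, Finset.empty_mem_powerset _⟩
  set M : ℝ := (Finset.univ.powerset : Finset (Finset V)).sup' hpne
    (fun s => ‖J (fun x => if x ∈ s then 1 else 0)‖) with hM
  have hbound : ∀ t, ‖J (thresh ustar t)‖ ≤ M := by
    intro t
    have : thresh ustar t = fun x =>
        if x ∈ (Finset.univ.filter (fun x => t < ustar x)) then (1:ℝ) else 0 := by
      funext x; simp [thresh]
    rw [this]
    exact Finset.le_sup' (fun s => ‖J (fun x => if x ∈ s then (1:ℝ) else 0)‖)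
      (Finset.mem_powerset.2 (Finset.subset_univ _))
  have hJint : IntegrableOn (fun t => J (thresh ustar t)) (Set.Ioo (0:ℝ) 1) := by
    refine Integrable.mono' (integrableOn_const ?_)
      (hJcont.measurable.comp hthreshmeas).aestronglyMeasurable
      (Filter.Eventually.of_forall hbound)
    rw [hvol]; exact ENNReal.one_lt_top.ne
  -- linear part: pointwise integrals
  have hlin1 : ∀ x : V, ∫ t in Set.Ioo (0:ℝ) 1, thresh ustar t x = ustar x := by
    intro x
    have h01 := hustar_mem x
    have heq : (fun t => thresh ustar t x)
        = (Set.Iio (ustar x)).indicator (fun _ => (1:ℝ)) := by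
      funext t
      by_cases h : t < ustar x <;> simp [thresh, Set.indicator, h]
    rw [heq, setIntegral_indicator measurableSet_Iio]
    have : Set.Ioo (0:ℝ) 1 ∩ Set.Iio (ustar x) = Set.Ioo 0 (ustar x) := by
      ext t
      constructor
      · rintro ⟨⟨h1, _⟩, h3⟩; exact ⟨h1, h3⟩
      · rintro ⟨h1, h2⟩; exact ⟨⟨h1, lt_of_lt_of_le h2 h01.2⟩, h2⟩
    rw [this]
    simp [Real.volume_Ioo, h01.1]
  have hlinint : ∀ x : V, IntegrableOn (fun t => c x * thresh ustar t x)
      (Set.Ioo (0:ℝ) 1) := by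
    intro x
    refine Integrable.mono' (g := fun _ => ‖c x‖) (integrableOn_const ?_)
      ((measurable_const.mul ((hthreshmeas.eval (a := x))) :
        Measurable fun t => c x * thresh ustar t x)).aestronglyMeasurable
      (Filter.Eventually.of_forall (fun t => ?_))
    · rw [hvol]; exact ENNReal.one_lt_top.ne
    · show ‖c x * thresh ustar t x‖ ≤ ‖c x‖
      rw [norm_mul]
      have : ‖thresh ustar t x‖ ≤ 1 := by
        by_cases h : t < ustar x <;> simp [thresh, h]
      nlinarith [norm_nonneg (c x)]
  have hlin : ∫ t in Set.Ioo (0:ℝ) 1, (∑ x, c x * thresh ustar t x)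
      = ∑ x, c x * ustar x := by
    rw [integral_finset_sum _ (fun x _ => hlinint x)]
    refine Finset.sum_congr rfl (fun x _ => ?_)
    rw [integral_const_mul, hlin1 x]
  -- the whole-energy integral identity
  have hEint : IntegrableOn (fun t => E (thresh ustar t)) (Set.Ioo (0:ℝ) 1) := by
    have : (fun t => E (thresh ustar t))
        = fun t => (∑ x, c x * thresh ustar t x) + J (thresh ustar t) := by
      funext t; exact hE _
    rw [this]
    exact ((integrable_finset_sum _ (fun x _ => hlinint x)).add hJint)
  have hkey : ∫ t in Set.Ioo (0:ℝ) 1, E (thresh ustar t) = E ustar := by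
    have : (fun t => E (thresh ustar t))
        = fun t => (∑ x, c x * thresh ustar t x) + J (thresh ustar t) := by
      funext t; exact hE _
    rw [this, integral_add (integrable_finset_sum _ (fun x _ => hlinint x)) hJint,
      hlin, ← hcoarea ustar hustar_mem, hE]
  -- pointwise lower bound
  have hge : ∀ t : ℝ, E ustar ≤ E (thresh ustar t) := by
    intro t
    refine hustar_min _ (fun x => ?_)
    by_cases h : t < ustar x <;> simp [thresh, h]
  -- deduce a.e. equality
  have hzero : (fun t => E (thresh ustar t) - E ustar)
      =ᵐ[volume.restrict (Set.Ioo (0:ℝ) 1)] 0 := by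
    rw [← integral_eq_zero_iff_of_nonneg (fun t => sub_nonneg.2 (hge t))
      (hEint.sub (integrableOn_const (by rw [hvol]; exact ENNReal.one_lt_top.ne)))]
    rw [integral_sub hEint (integrableOn_const (by rw [hvol]; exact ENNReal.one_lt_top.ne)),
      hkey, setIntegral_const]
    simp [Real.volume_Ioo]
  filter_upwards [hzero] with t ht v hv
  have h1 : E (thresh ustar t) = E ustar := by
    have := sub_eq_zero.mp ht
    linarith [ht, sub_eq_zero.mp (show E (thresh ustar t) - E ustar = 0 from ht)]
  rw [h1]
  refine hustar_min v (fun x => ?_)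
  rcases hv x with h | h <;> simp [h]
end

section
/- Discrete max-flow/min-cut duality for continuous max-flow: in the finite-dimensional setting with a discrete divergence operator div : ℝᴱ → ℝᵛ, the value of max{Σₓ ps(x) : |p(e)| ≤ α, ps(x) ≤ Cs(x), pt(x) ≤ Ct(x), (div p - ps + pt)(x) = 0} equals the value of min over u ∈ [0,1]ᵛ of Σₓ[(1-u)Cs + u·Ct](x) + α·TV(u), where TV(u) = Σₑ |(∇u)(e)| and ∇ is the adjoint of -div. -/
open Finset

/-- Key separation step: existence of a dual "flow" field. -/
lemma exists_dual_flow {V E : Type*} [Fintype V] [Fintype E]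
    (grad : (V → ℝ) →ₗ[ℝ] (E → ℝ)) (Cs Ct : V → ℝ) (α D : ℝ) (hα : 0 < α)
    (hD : ∀ u : V → ℝ, (∀ x, u x ∈ Set.Icc (0 : ℝ) 1) →
      D ≤ (∑ x, ((1 - u x) * Cs x + u x * Ct x)) + α * ∑ e, |grad u e|) :
    ∃ p : E → ℝ, (∀ e, |p e| ≤ α) ∧ ∀ u : V → ℝ, (∀ x, u x ∈ Set.Icc (0 : ℝ) 1) →
      D ≤ (∑ x, ((1 - u x) * Cs x + u x * Ct x)) - ∑ e, grad u e * p e := by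
  classical
  set c : (V → ℝ) → ℝ := fun u => ∑ x, ((1 - u x) * Cs x + u x * Ct x) with hcdef
  have hc : ∀ u : V → ℝ, c u = (∑ x, Cs x) + ∑ x, u x * (Ct x - Cs x) := by
    intro u
    rw [hcdef, ← Finset.sum_add_distrib]
    exact Finset.sum_congr rfl fun x _ => by ring
  -- the two convex sets in (E → ℝ) × ℝ
  set B : Set ((E → ℝ) × ℝ) := {z | α * ∑ e, |z.1 e| < z.2} with hBdef
  set A : Set ((E → ℝ) × ℝ) :=
    {z | ∃ u : V → ℝ, (∀ x, u x ∈ Set.Icc (0 : ℝ) 1) ∧ z.1 = grad u ∧ z.2 ≤ D - c u} with hAdef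
  have hBconv : Convex ℝ B := by
    intro z hz w hw a b ha hb hab
    simp only [hBdef, Set.mem_setOf_eq] at *
    have h1 : α * ∑ e, |(a • z + b • w).1 e| ≤
        a * (α * ∑ e, |z.1 e|) + b * (α * ∑ e, |w.1 e|) := by
      have : ∑ e, |(a • z + b • w).1 e| ≤ a * ∑ e, |z.1 e| + b * ∑ e, |w.1 e| := by
        rw [Finset.mul_sum, Finset.mul_sum, ← Finset.sum_add_distrib]
        refine Finset.sum_le_sum fun e _ => ?_
        simp only [Prod.fst_add, Prod.smul_fst, Pi.add_apply, Pi.smul_apply, smul_eq_mul]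
        calc |a * z.1 e + b * w.1 e| ≤ |a * z.1 e| + |b * w.1 e| := abs_add_le _ _
          _ = a * |z.1 e| + b * |w.1 e| := by
              rw [abs_mul, abs_mul, abs_of_nonneg ha, abs_of_nonneg hb]
      nlinarith
    have h2 : a * (α * ∑ e, |z.1 e|) + b * (α * ∑ e, |w.1 e|) < a * z.2 + b * w.2 := by
      rcases eq_or_lt_of_le ha with rfl | ha'
      · simp only [zero_mul, zero_add] at *
        have hb1 : b = 1 := by linarith
        nlinarith
      · have : a * (α * ∑ e, |z.1 e|) < a * z.2 := by exact (mul_lt_mul_iff_right₀ ha').2 hz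
        have : b * (α * ∑ e, |w.1 e|) ≤ b * w.2 := by
          exact mul_le_mul_of_nonneg_left (le_of_lt hw) hb
        linarith
    have : (a • z + b • w).2 = a * z.2 + b * w.2 := by
      simp [Prod.snd_add, Prod.smul_snd, smul_eq_mul]
    linarith
  have hBopen : IsOpen B := by
    have : Continuous fun z : (E → ℝ) × ℝ => α * ∑ e, |z.1 e| := by fun_prop
    exact isOpen_lt this continuous_snd
  have hAconv : Convex ℝ A := by
    rintro z ⟨u, hu, hz1, hz2⟩ w ⟨v, hv, hw1, hw2⟩ a b ha hb hab
    refine ⟨a • u + b • v, fun x => ?_, ?_, ?_⟩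
    · have h1 := hu x; have h2 := hv x
      simp only [Set.mem_Icc] at *
      constructor
      · simp only [Pi.add_apply, Pi.smul_apply, smul_eq_mul]
        nlinarith [h1.1, h2.1]
      · simp only [Pi.add_apply, Pi.smul_apply, smul_eq_mul]
        nlinarith [h1.2, h2.2]
    · simp only [Prod.fst_add, Prod.smul_fst, hz1, hw1, map_add, map_smul]
    · have hcw : c (a • u + b • v) = a * c u + b * c v := by
        rw [hc, hc, hc]
        have : ∑ x, (a • u + b • v) x * (Ct x - Cs x)
            = a * ∑ x, u x * (Ct x - Cs x) + b * ∑ x, v x * (Ct x - Cs x) := by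
          rw [Finset.mul_sum, Finset.mul_sum, ← Finset.sum_add_distrib]
          refine Finset.sum_congr rfl fun x _ => ?_
          simp only [Pi.add_apply, Pi.smul_apply, smul_eq_mul]; ring
        rw [this]; linear_combination (-(∑ x : V, Cs x)) * hab
      have : (a • z + b • w).2 = a * z.2 + b * w.2 := by
        simp [Prod.snd_add, Prod.smul_snd, smul_eq_mul]
      rw [this, hcw]
      have hD' : a * (D - c u) + b * (D - c v) = D - (a * c u + b * c v) := by
        linear_combination D * hab
      nlinarith [mul_le_mul_of_nonneg_left hz2 ha, mul_le_mul_of_nonneg_left hw2 hb]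
  have hdisj : Disjoint B A := by
    rw [Set.disjoint_left]
    rintro z hzB ⟨u, hu, hz1, hz2⟩
    simp only [hBdef, Set.mem_setOf_eq, hz1] at hzB
    have := hD u hu
    have hcu : c u = ∑ x : V, ((1 - u x) * Cs x + u x * Ct x) := rfl
    have : z.2 ≤ α * ∑ e, |grad u e| := by linarith
    linarith
  obtain ⟨f, γ, hfB, hfA⟩ := geometric_hahn_banach_open hBconv hBopen hAconv hdisj
  set β : ℝ := f ((0 : E → ℝ), (1 : ℝ)) with hβdef
  set q : E → ℝ := fun e => f ((Pi.single e 1 : E → ℝ), (0 : ℝ)) with hqdef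
  have hf : ∀ (y : E → ℝ) (s : ℝ), f (y, s) = (∑ e, y e * q e) + s * β := by
    intro y s
    have hsplit : ((y, s) : (E → ℝ) × ℝ) = (y, 0) + (0, s) := by
      rw [Prod.mk_add_mk]; simp
    have h0s : f ((0 : E → ℝ), s) = s * β := by
      have : ((0 : E → ℝ), s) = s • (((0 : E → ℝ), (1 : ℝ)) : (E → ℝ) × ℝ) := by
        rw [Prod.smul_mk]; simp
      rw [this, map_smul, smul_eq_mul, hβdef]
    have hy0 : ((y, (0 : ℝ)) : (E → ℝ) × ℝ)
        = ∑ e, y e • (((Pi.single e 1 : E → ℝ), (0 : ℝ)) : (E → ℝ) × ℝ) := by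
      refine Prod.ext ?_ ?_
      · rw [Prod.fst_sum]
        funext x
        rw [Finset.sum_apply]
        simp [Pi.single_apply, mul_ite, Finset.sum_ite_eq']
      · rw [Prod.snd_sum]; simp
    have hfy0 : f (y, (0 : ℝ)) = ∑ e, y e * q e := by
      rw [hy0, map_sum]
      refine Finset.sum_congr rfl fun e _ => ?_
      rw [map_smul, smul_eq_mul, hqdef]
    rw [hsplit, map_add, hfy0, h0s]
  -- basic consequences
  have hu0 : (fun _ : V => (0 : ℝ)) ∈ {u : V → ℝ | ∀ x, u x ∈ Set.Icc (0:ℝ) 1} := by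
    intro x; exact ⟨le_refl 0, zero_le_one⟩
  have hA0 : (((0 : E → ℝ), D - c (fun _ => 0)) : (E → ℝ) × ℝ) ∈ A := by
    refine ⟨(fun _ => 0), hu0, ?_, le_refl _⟩
    simp only; rw [show (fun _ : V => (0:ℝ)) = (0 : V → ℝ) from rfl, map_zero]
  have hγA0 : γ ≤ (D - c (fun _ => 0)) * β := by
    have := hfA _ hA0
    rw [hf] at this
    simpa using this

  have hBs : ∀ s : ℝ, 0 < s → s * β < γ := by
    intro s hs
    have hmem : (((0 : E → ℝ), s) : (E → ℝ) × ℝ) ∈ B := by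
      simp only [hBdef, Set.mem_setOf_eq]
      simp [hs]
    have := hfB _ hmem
    rw [hf] at this
    simpa using this

  have hβneg : β < 0 := by
    by_contra h
    push_neg at h
    rcases eq_or_lt_of_le h with h0 | hpos
    · -- β = 0
      have h1 := hγA0
      rw [← h0] at h1
      simp at h1
      have h2 := hBs 1 one_pos
      rw [← h0] at h2
      simp at h2
      linarith
    · have h2 := hBs ((|γ| + 1) / β) (div_pos (by positivity) hpos)
      rw [div_mul_cancel₀ _ (ne_of_gt hpos)] at h2
      have : γ ≤ |γ| := le_abs_self γ
      linarith
  have hγ0 : 0 ≤ γ := by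
    by_contra h
    push_neg at h
    have hβne : β ≠ 0 := ne_of_lt hβneg
    have h2 := hBs (γ / (2 * β)) (div_pos_of_neg_of_neg h (by linarith))
    have : γ / (2 * β) * β = γ / 2 := by
      field_simp
    rw [this] at h2
    linarith
  set p : E → ℝ := fun e => β⁻¹ * q e with hpdef
  refine ⟨p, ?_, ?_⟩
  · -- |p e| ≤ α
    intro e
    have key : ∀ n : ℕ, (n : ℝ) * (|q e| + α * β) < γ - β := by
      intro n
      set r : ℝ := if 0 ≤ q e then (n : ℝ) else -(n : ℝ) with hrdef
      have hrabs : |r| = n := by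
        rw [hrdef]; split <;> simp
      have hmem : ((r • (Pi.single e 1 : E → ℝ), α * n + 1) : (E → ℝ) × ℝ) ∈ B := by
        simp only [hBdef, Set.mem_setOf_eq]
        have : ∑ e', |(r • (Pi.single e 1 : E → ℝ)) e'| = |r| := by
          have : ∀ e', |(r • (Pi.single e 1 : E → ℝ)) e'| =
              if e' = e then |r| else 0 := by
            intro e'
            by_cases h : e' = e
            · simp [h, Pi.single_apply]
            · simp [h, Pi.single_apply]
          rw [Finset.sum_congr rfl fun e' _ => this e', Finset.sum_ite_eq' univ e]
          simp
        rw [this, hrabs]; linarith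
      have hlt := hfB _ hmem
      rw [hf] at hlt
      have hsum : ∑ e', (r • (Pi.single e 1 : E → ℝ)) e' * q e' = r * q e := by
        have : ∀ e', (r • (Pi.single e 1 : E → ℝ)) e' * q e' =
            if e' = e then r * q e else 0 := by
          intro e'
          by_cases h : e' = e
          · simp [h, Pi.single_apply]
          · simp [h, Pi.single_apply]
        rw [Finset.sum_congr rfl fun e' _ => this e', Finset.sum_ite_eq' univ e]
        simp
      rw [hsum] at hlt
      have hrq : r * q e = (n : ℝ) * |q e| := by
        rw [hrdef]
        by_cases h : 0 ≤ q e
        · rw [if_pos h, abs_of_nonneg h]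
        · rw [if_neg h, abs_of_neg (lt_of_not_ge h)]; ring
      nlinarith [hlt]
    have hle : |q e| + α * β ≤ 0 := by
      by_contra h
      push_neg at h
      obtain ⟨n, hn⟩ := exists_nat_gt ((γ - β) / (|q e| + α * β))
      have := key n
      rw [div_lt_iff₀ h] at hn
      linarith
    have : |q e| ≤ α * (-β) := by linarith
    calc |p e| = |β|⁻¹ * |q e| := by rw [hpdef]; rw [abs_mul, abs_inv]
      _ ≤ |β|⁻¹ * (α * (-β)) := by
          exact mul_le_mul_of_nonneg_left this (by positivity)
      _ = α := by
          have hβne : β ≠ 0 := ne_of_lt hβneg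
          rw [abs_of_neg hβneg]
          field_simp
  · -- duality inequality
    intro u hu
    have hmem : ((grad u, D - c u) : (E → ℝ) × ℝ) ∈ A := ⟨u, hu, rfl, le_refl _⟩
    have h1 := hfA _ hmem
    rw [hf] at h1
    -- γ ≤ ∑ grad u e * q e + (D - c u) * β
    have h2 : ∑ e, grad u e * p e = β⁻¹ * ∑ e, grad u e * q e := by
      rw [hpdef, Finset.mul_sum]
      exact Finset.sum_congr rfl fun e _ => by ring
    have hβne : β ≠ 0 := ne_of_lt hβneg
    have hβinv : β⁻¹ < 0 := inv_neg''.2 hβneg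
    have h3 : β⁻¹ * γ ≥ β⁻¹ * ((∑ e, grad u e * q e) + (D - c u) * β) := by
      exact mul_le_mul_of_nonpos_left h1 (le_of_lt hβinv)
    have h4 : β⁻¹ * ((∑ e, grad u e * q e) + (D - c u) * β)
        = (∑ e, grad u e * p e) + (D - c u) := by
      rw [h2]; field_simp
    have h5 : β⁻¹ * γ ≤ 0 := mul_nonpos_of_nonpos_of_nonneg (le_of_lt hβinv) hγ0
    rw [hcdef] at *
    linarith [h3, h4.symm.le, h4.le]
open Finset

/-- Discrete max-flow / min-cut duality: the optimal value of the (discrete) continuous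
max-flow model equals the optimal value of the convex relaxed min-cut model. Here
`V` is a finite set of pixels, `E` a finite set of edges, `grad` a discrete gradient and
`dvg = -gradᵀ` its negative adjoint (discrete divergence). -/
theorem maxflow_mincut_duality {V E : Type*} [Fintype V] [Fintype E] [Nonempty V]
    (grad : (V → ℝ) →ₗ[ℝ] (E → ℝ)) (dvg : (E → ℝ) →ₗ[ℝ] (V → ℝ))
    (hadj : ∀ (u : V → ℝ) (p : E → ℝ), ∑ x, dvg p x * u x = -∑ e, grad u e * p e)
    (Cs Ct : V → ℝ) (α : ℝ) (hα : 0 < α) :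
    sSup { S : ℝ | ∃ (ps pt : V → ℝ) (p : E → ℝ),
        (∀ e, |p e| ≤ α) ∧ (∀ x, ps x ≤ Cs x) ∧ (∀ x, pt x ≤ Ct x) ∧
        (∀ x, dvg p x - ps x + pt x = 0) ∧ S = ∑ x, ps x } =
      sInf { T : ℝ | ∃ u : V → ℝ, (∀ x, u x ∈ Set.Icc (0 : ℝ) 1) ∧
        T = (∑ x, ((1 - u x) * Cs x + u x * Ct x)) + α * ∑ e, |grad u e| } := by
  classical
  set P : Set ℝ := { S : ℝ | ∃ (ps pt : V → ℝ) (p : E → ℝ),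
        (∀ e, |p e| ≤ α) ∧ (∀ x, ps x ≤ Cs x) ∧ (∀ x, pt x ≤ Ct x) ∧
        (∀ x, dvg p x - ps x + pt x = 0) ∧ S = ∑ x, ps x } with hPdef
  set T : Set ℝ := { T : ℝ | ∃ u : V → ℝ, (∀ x, u x ∈ Set.Icc (0 : ℝ) 1) ∧
        T = (∑ x, ((1 - u x) * Cs x + u x * Ct x)) + α * ∑ e, |grad u e| } with hTdef
  -- P is nonempty
  have hPne : P.Nonempty := by
    refine ⟨∑ x, min (Cs x) (Ct x), fun x => min (Cs x) (Ct x), fun x => min (Cs x) (Ct x),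
      0, fun e => ?_, fun x => min_le_left _ _, fun x => min_le_right _ _, fun x => ?_, rfl⟩
    · simp [abs_nonneg, le_of_lt hα]
    · simp
  -- T is nonempty
  have hTne : T.Nonempty :=
    ⟨(∑ x, ((1 - (0:ℝ)) * Cs x + (0:ℝ) * Ct x)) + α * ∑ e, |grad (fun _ => (0:ℝ)) e|,
      fun _ => (0:ℝ), fun x => ⟨le_refl 0, zero_le_one⟩, rfl⟩
  -- weak duality
  have hweak : ∀ S ∈ P, ∀ T' ∈ T, S ≤ T' := by
    rintro S ⟨ps, pt, p, hp, hpsC, hptC, hcon, rfl⟩ T' ⟨u, hu, rfl⟩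
    have hps : ∀ x, ps x = dvg p x + pt x := fun x => by linarith [hcon x]
    have hsplit : ∑ x, ps x
        = (∑ x, ((1 - u x) * ps x + u x * pt x)) + ∑ x, dvg p x * u x := by
      rw [← Finset.sum_add_distrib]
      refine Finset.sum_congr rfl fun x _ => ?_
      linear_combination (u x) * (hps x)
    have h1 : ∑ x, ((1 - u x) * ps x + u x * pt x)
        ≤ ∑ x, ((1 - u x) * Cs x + u x * Ct x) := by
      refine Finset.sum_le_sum fun x _ => ?_
      have hx := hu x
      simp only [Set.mem_Icc] at hx
      have h1u : (0:ℝ) ≤ 1 - u x := by linarith [hx.2]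
      exact add_le_add (mul_le_mul_of_nonneg_left (hpsC x) h1u)
        (mul_le_mul_of_nonneg_left (hptC x) hx.1)
    have h2 : ∑ x, dvg p x * u x ≤ α * ∑ e, |grad u e| := by
      rw [hadj u p]
      have h3 : ∑ e, (-(grad u e * p e)) ≤ ∑ e, |grad u e| * α := by
        refine Finset.sum_le_sum fun e _ => ?_
        calc -(grad u e * p e) ≤ |grad u e * p e| := neg_le_abs _
          _ = |grad u e| * |p e| := abs_mul _ _
          _ ≤ |grad u e| * α := mul_le_mul_of_nonneg_left (hp e) (abs_nonneg _)
      rw [Finset.sum_neg_distrib] at h3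
      calc -∑ e, grad u e * p e ≤ ∑ e, |grad u e| * α := h3
        _ = α * ∑ e, |grad u e| := by rw [← Finset.sum_mul, mul_comm]
    linarith
  -- bounds
  have hPbdd : BddAbove P := by
    refine ⟨∑ x, Cs x, ?_⟩
    rintro S ⟨ps, pt, p, hp, hpsC, hptC, hcon, rfl⟩
    exact Finset.sum_le_sum fun x _ => hpsC x
  have hTbdd : BddBelow T := by
    refine ⟨∑ x, min (Cs x) (Ct x), ?_⟩
    rintro T' ⟨u, hu, rfl⟩
    have h1 : ∑ x, min (Cs x) (Ct x) ≤ ∑ x, ((1 - u x) * Cs x + u x * Ct x) := by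
      refine Finset.sum_le_sum fun x _ => ?_
      have hx := hu x
      simp only [Set.mem_Icc] at hx
      have h1u : (0:ℝ) ≤ 1 - u x := by linarith [hx.2]
      calc min (Cs x) (Ct x) = (1 - u x) * min (Cs x) (Ct x) + u x * min (Cs x) (Ct x) := by
            ring
        _ ≤ (1 - u x) * Cs x + u x * Ct x :=
            add_le_add (mul_le_mul_of_nonneg_left (min_le_left _ _) h1u)
              (mul_le_mul_of_nonneg_left (min_le_right _ _) hx.1)
    have h2 : 0 ≤ α * ∑ e, |grad u e| := by positivity
    linarith
  refine le_antisymm ?_ ?_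
  · exact csSup_le hPne fun S hS => le_csInf hTne fun T' hT' => hweak S hS T' hT'
  · -- strong duality
    have hD : ∀ u : V → ℝ, (∀ x, u x ∈ Set.Icc (0 : ℝ) 1) →
        sInf T ≤ (∑ x, ((1 - u x) * Cs x + u x * Ct x)) + α * ∑ e, |grad u e| :=
      fun u hu => csInf_le hTbdd ⟨u, hu, rfl⟩
    obtain ⟨p, hp, hdual⟩ := exists_dual_flow grad Cs Ct α (sInf T) hα hD
    set u₀ : V → ℝ := fun x => if Cs x ≤ Ct x + dvg p x then 0 else 1 with hu₀def
    have hu₀Q : ∀ x, u₀ x ∈ Set.Icc (0:ℝ) 1 := by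
      intro x
      by_cases h : Cs x ≤ Ct x + dvg p x <;> simp [hu₀def, h]
    have hkey : ∑ x, min (Cs x) (Ct x + dvg p x)
        = (∑ x, ((1 - u₀ x) * Cs x + u₀ x * Ct x)) - ∑ e, grad u₀ e * p e := by
      have h1 : -∑ e, grad u₀ e * p e = ∑ x, dvg p x * u₀ x := (hadj u₀ p).symm
      have h2 : (∑ x, ((1 - u₀ x) * Cs x + u₀ x * Ct x)) + ∑ x, dvg p x * u₀ x
          = ∑ x, min (Cs x) (Ct x + dvg p x) := by
        rw [← Finset.sum_add_distrib]
        refine Finset.sum_congr rfl fun x _ => ?_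
        by_cases h : Cs x ≤ Ct x + dvg p x
        · simp only [hu₀def, if_pos h, min_eq_left h]; ring
        · simp only [hu₀def, if_neg h, min_eq_right (le_of_lt (lt_of_not_ge h))]; ring
      linarith
    have hS₀le : sInf T ≤ ∑ x, min (Cs x) (Ct x + dvg p x) := by
      rw [hkey]
      exact hdual u₀ hu₀Q
    have hS₀P : (∑ x, min (Cs x) (Ct x + dvg p x)) ∈ P := by
      refine ⟨fun x => min (Cs x) (Ct x + dvg p x),
        fun x => min (Cs x) (Ct x + dvg p x) - dvg p x, p, hp,
        fun x => min_le_left _ _, fun x => ?_, fun x => by ring, rfl⟩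
      have := min_le_right (Cs x) (Ct x + dvg p x)
      dsimp only
      linarith
    exact le_trans hS₀le (le_csSup hPbdd hS₀P)
end

section
/- Dual of TV-L2 denoising (discrete): the minimizer u* of F(u) = (1/2)‖u - f‖² + α·TV(u) over ℝᵛ, with TV(u) = Σₑ|(∇u)(e)|, satisfies u* = f + div p* where p* solves max over {p : |p(e)| ≤ α for all e} of -⟨div p, f⟩ - (1/2)‖div p‖²; equivalently u* = f - proj onto the set {−div p : ‖p‖∞ ≤ α} applied appropriately, and strong duality min F = dual max value holds. -/
/-- Helper: if `0 ≤ 2tA + t²B` for all `t ∈ (0,1]` and `0 ≤ B`, then `0 ≤ A`. -/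
lemma rof_quad_nonneg {A B : ℝ} (hB : 0 ≤ B)
    (h : ∀ t : ℝ, 0 < t → t ≤ 1 → 0 ≤ 2 * t * A + t ^ 2 * B) : 0 ≤ A := by
  by_contra hA
  push_neg at hA
  rcases eq_or_lt_of_le hB with hB0 | hB0
  · have := h 1 one_pos le_rfl; nlinarith
  · set t := min 1 (-A / B) with ht
    have hAB : 0 < -A / B := div_pos (by linarith) hB0
    have ht0 : 0 < t := lt_min one_pos hAB
    have ht1 : t ≤ 1 := min_le_left _ _
    have ht2 : t ≤ -A / B := min_le_right _ _
    have htB : t * B ≤ -A := (le_div_iff₀ hB0).mp ht2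
    have := h t ht0 ht1
    nlinarith

/-- Discrete Chambolle dual of the ROF (TV-L2) model: the minimizer `u*` of
`F(u) = (1/2)‖u-f‖² + α Σₑ|∇u(e)|` satisfies `u* = f + div p*` where `p*` maximizes
`-⟨div p, f⟩ - (1/2)‖div p‖²` over `‖p‖∞ ≤ α`, and strong duality
`min F = (1/2)‖f‖² - (1/2)‖f + div p*‖²` holds. -/
theorem rof_dual {V E : Type*} [Fintype V] [Fintype E]
    (grad : (V → ℝ) →ₗ[ℝ] (E → ℝ)) (dvg : (E → ℝ) →ₗ[ℝ] (V → ℝ))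
    (hadj : ∀ (u : V → ℝ) (p : E → ℝ), ∑ x, dvg p x * u x = -∑ e, grad u e * p e)
    (f : V → ℝ) (α : ℝ) (hα : 0 < α)
    (F : (V → ℝ) → ℝ)
    (hF : ∀ u, F u = (1 / 2) * (∑ x, (u x - f x) ^ 2) + α * ∑ e, |grad u e|)
    (ustar : V → ℝ) (hmin : ∀ u, F ustar ≤ F u) :
    ∃ pstar : E → ℝ, (∀ e, |pstar e| ≤ α) ∧
      ustar = (fun x => f x + dvg pstar x) ∧
      (∀ p : E → ℝ, (∀ e, |p e| ≤ α) →
        -(∑ x, dvg p x * f x) - (1 / 2) * (∑ x, (dvg p x) ^ 2) ≤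
          -(∑ x, dvg pstar x * f x) - (1 / 2) * (∑ x, (dvg pstar x) ^ 2)) ∧
      F ustar = (1 / 2) * (∑ x, (f x) ^ 2) -
        (1 / 2) * (∑ x, (f x + dvg pstar x) ^ 2) := by
  classical
  -- the compact feasible box
  set K : Set (E → ℝ) := {p | ∀ e, |p e| ≤ α} with hKdef
  have hKcomp : IsCompact K := by
    have hEq : K = Set.pi Set.univ (fun _ : E => Set.Icc (-α) α) := by
      ext p
      simp only [hKdef, Set.mem_setOf_eq, Set.mem_univ_pi, Set.mem_Icc, abs_le]
    rw [hEq]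
    exact isCompact_univ_pi fun _ => isCompact_Icc
  have hK0 : (0 : E → ℝ) ∈ K := by
    intro e; simp [hα.le]
  -- the (continuous) objective for the projection problem
  have hcont : Continuous fun p : E → ℝ => ∑ x, (f x + dvg p x) ^ 2 := by
    apply continuous_finset_sum
    intro x _
    have h1 : Continuous fun p : E → ℝ => dvg p x :=
      ((LinearMap.proj x).comp dvg).continuous_of_finiteDimensional
    exact ((continuous_const.add h1).pow 2)
  obtain ⟨pstar, hpK, hpmin⟩ :=
    hKcomp.exists_isMinOn ⟨0, hK0⟩ hcont.continuousOn
  have hpmin' : ∀ q ∈ K, (∑ x, (f x + dvg pstar x) ^ 2) ≤ ∑ x, (f x + dvg q x) ^ 2 :=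
    fun q hq => hpmin hq
  set u0 : V → ℝ := fun x => f x + dvg pstar x with hu0
  -- variational inequality: ∀ q ∈ K, 0 ≤ ∑ u0 (dvg q - dvg pstar)
  have hVI : ∀ q ∈ K, 0 ≤ ∑ x, u0 x * (dvg q x - dvg pstar x) := by
    intro q hq
    apply rof_quad_nonneg (B := ∑ x, (dvg q x - dvg pstar x) ^ 2)
      (Finset.sum_nonneg fun x _ => sq_nonneg _)
    intro t ht0 ht1
    have hmem : pstar + t • (q - pstar) ∈ K := by
      intro e
      have h1 : (pstar + t • (q - pstar)) e = (1 - t) * pstar e + t * q e := by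
        simp [Pi.add_apply, Pi.smul_apply, smul_eq_mul]; ring
      rw [h1]
      calc |(1 - t) * pstar e + t * q e| ≤ |(1 - t) * pstar e| + |t * q e| := abs_add_le _ _
        _ = (1 - t) * |pstar e| + t * |q e| := by
            rw [abs_mul, abs_mul, abs_of_nonneg (by linarith), abs_of_nonneg ht0.le]
        _ ≤ (1 - t) * α + t * α := by
            have := hpK e; have := hq e
            have h1t : (0:ℝ) ≤ 1 - t := by linarith
            nlinarith
        _ = α := by ring
    have hval := hpmin' _ hmem
    have hlin : ∀ x, dvg (pstar + t • (q - pstar)) x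
        = dvg pstar x + t * (dvg q x - dvg pstar x) := by
      intro x
      simp [map_add, map_smul, map_sub, Pi.smul_apply, smul_eq_mul, Pi.add_apply,
        Pi.sub_apply]
    have hterm : ∀ x, (f x + dvg (pstar + t • (q - pstar)) x) ^ 2
        = (f x + dvg pstar x) ^ 2
          + 2 * t * (u0 x * (dvg q x - dvg pstar x))
          + t ^ 2 * (dvg q x - dvg pstar x) ^ 2 := by
      intro x; rw [hlin x]; simp only [hu0]; ring
    rw [Finset.sum_congr rfl fun x _ => hterm x] at hval
    rw [Finset.sum_add_distrib, Finset.sum_add_distrib, ← Finset.mul_sum,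
      ← Finset.mul_sum] at hval
    linarith
  -- sign vector
  set qs : E → ℝ := fun e => if 0 ≤ grad u0 e then α else -α with hqs
  have hqsK : qs ∈ K := by
    intro e
    simp only [hqs]
    split_ifs <;> simp [abs_of_nonneg hα.le, abs_of_neg, hα.le, le_refl]
  have hqssum : ∑ e, grad u0 e * qs e = α * ∑ e, |grad u0 e| := by
    rw [Finset.mul_sum]
    refine Finset.sum_congr rfl fun e _ => ?_
    simp only [hqs]
    split_ifs with h
    · rw [abs_of_nonneg h]; ring
    · push_neg at h; rw [abs_of_neg h]; ring
  -- key equality : ∑ grad u0 * pstar = α * TV(u0)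
  set T : ℝ := ∑ e, |grad u0 e| with hT
  set S : ℝ := ∑ e, grad u0 e * pstar e with hS
  have hSle : S ≤ α * T := by
    rw [hS, hT, Finset.mul_sum]
    refine Finset.sum_le_sum fun e _ => ?_
    calc grad u0 e * pstar e ≤ |grad u0 e * pstar e| := le_abs_self _
      _ = |grad u0 e| * |pstar e| := abs_mul _ _
      _ ≤ |grad u0 e| * α := mul_le_mul_of_nonneg_left (hpK e) (abs_nonneg _)
      _ = α * |grad u0 e| := mul_comm _ _
  have hSge : α * T ≤ S := by
    have hvi := hVI qs hqsK
    have h1 : ∑ x, u0 x * (dvg qs x - dvg pstar x)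
        = ∑ x, dvg qs x * u0 x - ∑ x, dvg pstar x * u0 x := by
      rw [← Finset.sum_sub_distrib]
      exact Finset.sum_congr rfl fun x _ => by ring
    rw [h1, hadj u0 qs, hadj u0 pstar, hqssum] at hvi
    rw [hS, hT]
    linarith
  have hE1 : S = α * T := le_antisymm hSle hSge
  -- weak duality
  have weak : ∀ (u : V → ℝ) (p : E → ℝ), (∀ e, |p e| ≤ α) →
      -(∑ x, dvg p x * f x) - (1 / 2) * (∑ x, (dvg p x) ^ 2) ≤ F u := by
    intro u p hp
    rw [hF]
    have hs1 : ∑ x, (-(dvg p x * f x) - (1 / 2) * (dvg p x) ^ 2)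
        ≤ ∑ x, ((1 / 2) * (u x - f x) ^ 2 - dvg p x * u x) :=
      Finset.sum_le_sum fun x _ => by nlinarith [sq_nonneg (u x - f x - dvg p x)]
    have e1 : ∑ x, (-(dvg p x * f x) - (1 / 2) * (dvg p x) ^ 2)
        = -(∑ x, dvg p x * f x) - (1 / 2) * (∑ x, (dvg p x) ^ 2) := by
      rw [Finset.sum_sub_distrib, ← Finset.mul_sum, Finset.sum_neg_distrib]
    have e2 : ∑ x, ((1 / 2) * (u x - f x) ^ 2 - dvg p x * u x)
        = (1 / 2) * (∑ x, (u x - f x) ^ 2) - ∑ x, dvg p x * u x := by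
      rw [Finset.sum_sub_distrib, ← Finset.mul_sum]
    have h2 : ∑ e, grad u e * p e ≤ α * ∑ e, |grad u e| := by
      rw [Finset.mul_sum]
      refine Finset.sum_le_sum fun e _ => ?_
      calc grad u e * p e ≤ |grad u e * p e| := le_abs_self _
        _ = |grad u e| * |p e| := abs_mul _ _
        _ ≤ |grad u e| * α := mul_le_mul_of_nonneg_left (hp e) (abs_nonneg _)
        _ = α * |grad u e| := mul_comm _ _
    have h3 := hadj u p
    rw [e1, e2] at hs1
    linarith
  -- value identities
  have hWsplit : ∑ x, dvg pstar x * u0 x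
      = ∑ x, dvg pstar x * f x + ∑ x, (dvg pstar x) ^ 2 := by
    rw [← Finset.sum_add_distrib]
    exact Finset.sum_congr rfl fun x _ => by simp only [hu0]; ring
  have hQ0 : ∑ x, (u0 x - f x) ^ 2 = ∑ x, (dvg pstar x) ^ 2 :=
    Finset.sum_congr rfl fun x _ => by simp only [hu0]; ring
  have hFu0 : F u0 = -(∑ x, dvg pstar x * f x) - (1 / 2) * (∑ x, (dvg pstar x) ^ 2) := by
    rw [hF, hQ0]
    have h4 : ∑ x, dvg pstar x * f x + ∑ x, (dvg pstar x) ^ 2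
        = -∑ e, grad u0 e * pstar e := by rw [← hWsplit]; exact hadj u0 pstar
    have h5 : ∑ e, grad u0 e * pstar e = α * ∑ e, |grad u0 e| := by
      rw [← hS, ← hT]; exact hE1
    linarith
  -- u0 is a minimizer, hence equal to ustar by strict convexity
  have hFu0min : ∀ u, F u0 ≤ F u := fun u => by
    rw [hFu0]; exact weak u pstar hpK
  have hFeq : F ustar = F u0 := le_antisymm (hmin u0) (hFu0min ustar)
  have hueq : ustar = u0 := by
    set m : V → ℝ := fun x => (ustar x + u0 x) / 2 with hm
    have hmfun : m = (1 / 2 : ℝ) • (ustar + u0) := by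
      funext x; simp [hm]; ring
    have hgradm : ∀ e, grad m e = (grad ustar e + grad u0 e) / 2 := by
      intro e
      rw [hmfun, map_smul, map_add]
      simp [Pi.smul_apply, smul_eq_mul]
      ring
    have hTVm : ∑ e, |grad m e| ≤ ((∑ e, |grad ustar e|) + ∑ e, |grad u0 e|) / 2 := by
      have : ∑ e, |grad m e| ≤ ∑ e, (|grad ustar e| + |grad u0 e|) / 2 := by
        refine Finset.sum_le_sum fun e _ => ?_
        rw [hgradm e]
        calc |(grad ustar e + grad u0 e) / 2| = |grad ustar e + grad u0 e| / 2 := by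
              rw [abs_div]; simp
          _ ≤ (|grad ustar e| + |grad u0 e|) / 2 := by
              have := abs_add_le (grad ustar e) (grad u0 e); linarith
      calc ∑ e, |grad m e| ≤ ∑ e, (|grad ustar e| + |grad u0 e|) / 2 := this
        _ = ((∑ e, |grad ustar e|) + ∑ e, |grad u0 e|) / 2 := by
            rw [← Finset.sum_add_distrib, ← Finset.sum_div]
    have hq : ∑ x, (m x - f x) ^ 2
        = (1 / 2) * (∑ x, (ustar x - f x) ^ 2) + (1 / 2) * (∑ x, (u0 x - f x) ^ 2)
          - (1 / 4) * (∑ x, (ustar x - u0 x) ^ 2) := by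
      have hterm : ∀ x, (m x - f x) ^ 2
          = (1 / 2) * (ustar x - f x) ^ 2 + (1 / 2) * (u0 x - f x) ^ 2
            - (1 / 4) * (ustar x - u0 x) ^ 2 := by
        intro x; simp only [hm]; ring
      rw [Finset.sum_congr rfl fun x _ => hterm x, Finset.sum_sub_distrib,
        Finset.sum_add_distrib, ← Finset.mul_sum, ← Finset.mul_sum, ← Finset.mul_sum]
    have hFm : F m ≤ (F ustar + F u0) / 2 - (1 / 8) * (∑ x, (ustar x - u0 x) ^ 2) := by
      rw [hF m, hF ustar, hF u0, hq]
      nlinarith [hTVm, hα]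
    have hmm := hmin m
    have hR : ∑ x, (ustar x - u0 x) ^ 2 ≤ 0 := by
      rw [hFeq] at hmm
      linarith [hFm, hmm]
    have hR0 : ∑ x, (ustar x - u0 x) ^ 2 = 0 :=
      le_antisymm hR (Finset.sum_nonneg fun x _ => sq_nonneg _)
    funext x
    have := (Finset.sum_eq_zero_iff_of_nonneg
      (fun x _ => sq_nonneg (ustar x - u0 x))).mp hR0 x (Finset.mem_univ x)
    have hx : ustar x - u0 x = 0 := by
      exact pow_eq_zero_iff (n := 2) (by norm_num) |>.mp this
    linarith
  refine ⟨pstar, hpK, hueq, ?_, ?_⟩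
  · intro p hp
    have := weak u0 p hp
    rw [hFu0] at this
    exact this
  · rw [hueq, hFu0]
    have hexp : ∑ x, (f x + dvg pstar x) ^ 2
        = ∑ x, (f x) ^ 2 + 2 * (∑ x, dvg pstar x * f x) + ∑ x, (dvg pstar x) ^ 2 := by
      have hterm : ∀ x, (f x + dvg pstar x) ^ 2
          = (f x) ^ 2 + 2 * (dvg pstar x * f x) + (dvg pstar x) ^ 2 := fun x => by ring
      rw [Finset.sum_congr rfl fun x _ => hterm x, Finset.sum_add_distrib,
        Finset.sum_add_distrib, ← Finset.mul_sum]
    rw [hexp]; ring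
end
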